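/- Let L : ℝⁿ → ℝ be differentiable with H-Lipschitz gradient for some H > 0, bounded below by m ∈ ℝ (L(θ) ≥ m for all θ), let 0 < α ≤ 1/H and c ∈ [0, 1). Let (θₜ)ₜ≥0 be a sequence in ℝⁿ and (dₜ)ₜ≥0 directions with θₜ₊₁ = θₜ − α dₜ and ‖∇L(θₜ) − dₜ‖ ≤ c‖∇L(θₜ)‖ for every t. Then for every T ≥ 0, min_{0 ≤ t ≤ T} ‖∇L(θₜ)‖² ≤ 2(L(θ₀) − m) / (α(1 − c²)(T + 1)); in particular, the sequence T ↦ min_{0 ≤ t ≤ T} ‖∇L(θₜ)‖² is O(1/T). -/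

import Mathlib

open RealInnerProductSpace intervalIntegral

lemma descent_lemma {n : ℕ} (L : EuclideanSpace ℝ (Fin n) → ℝ) (H : ℝ) (hH : 0 ≤ H)
    (hdiff : Differentiable ℝ L)
    (hlip : ∀ x y : EuclideanSpace ℝ (Fin n),
      ‖gradient L x - gradient L y‖ ≤ H * ‖x - y‖)
    (x u : EuclideanSpace ℝ (Fin n)) :
    L (x + u) ≤ L x + ⟪gradient L x, u⟫ + H / 2 * ‖u‖ ^ 2 := by
  have hgc : Continuous (gradient L) := by
    refine (LipschitzWith.of_dist_le_mul (K := ⟨H, hH⟩) ?_).continuous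
    intro a b
    rw [dist_eq_norm, dist_eq_norm]; exact hlip a b
  set φ' : ℝ → ℝ := fun t => ⟪gradient L (x + t • u), u⟫ with hφ'
  have hderiv : ∀ t : ℝ, HasDerivAt (fun s : ℝ => L (x + s • u)) (φ' t) t := by
    intro t
    have hc : HasDerivAt (fun s : ℝ => x + s • u) u t := by
      simpa using ((hasDerivAt_id t).smul_const u).const_add x
    have hL := ((hdiff (x + t • u)).hasGradientAt.hasFDerivAt).comp_hasDerivAt t hc
    have e : φ' t = ((InnerProductSpace.toDual ℝ _) (gradient L (x + t • u))) u := by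
      simp [hφ', InnerProductSpace.toDual_apply_apply]
    rw [e]; exact hL
  have hcont : Continuous φ' := by
    exact (Continuous.inner (hgc.comp (by fun_prop)) continuous_const)
  have hFTC : ∫ t in (0:ℝ)..1, φ' t = L (x + u) - L x := by
    have := intervalIntegral.integral_eq_sub_of_hasDerivAt
      (f := fun s : ℝ => L (x + s • u)) (f' := φ')
      (fun t _ => hderiv t) (hcont.intervalIntegrable 0 1)
    simpa using this
  have hbound : ∀ t ∈ Set.Icc (0:ℝ) 1, φ' t ≤ φ' 0 + H * t * ‖u‖ ^ 2 := by
    intro t ht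
    have h1 : φ' t - φ' 0 ≤ ‖gradient L (x + t • u) - gradient L x‖ * ‖u‖ := by
      have : φ' t - φ' 0 = ⟪gradient L (x + t • u) - gradient L x, u⟫ := by
        simp [hφ', inner_sub_left]
      rw [this]
      exact real_inner_le_norm _ _
    have h2 : ‖gradient L (x + t • u) - gradient L x‖ ≤ H * (t * ‖u‖) := by
      have := hlip (x + t • u) x
      simpa [norm_smul, abs_of_nonneg ht.1, mul_assoc] using this
    nlinarith [norm_nonneg u, mul_le_mul_of_nonneg_right h2 (norm_nonneg u)]
  have hmono : ∫ t in (0:ℝ)..1, φ' t ≤ ∫ t in (0:ℝ)..1, (φ' 0 + H * t * ‖u‖ ^ 2) := by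
    apply intervalIntegral.integral_mono_on zero_le_one (hcont.intervalIntegrable 0 1)
      ((by fun_prop : Continuous fun t : ℝ => φ' 0 + H * t * ‖u‖ ^ 2).intervalIntegrable 0 1)
    exact hbound
  have hval : ∫ t in (0:ℝ)..1, (φ' 0 + H * t * ‖u‖ ^ 2) = φ' 0 + H / 2 * ‖u‖ ^ 2 := by
    have : ∫ t in (0:ℝ)..1, (φ' 0 + H * t * ‖u‖ ^ 2)
        = ∫ t in (0:ℝ)..1, (φ' 0 + (H * ‖u‖ ^ 2) * t) := by
      congr 1; ext t; ring
    rw [this, intervalIntegral.integral_add (intervalIntegrable_const)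
      ((intervalIntegrable_id).const_mul _), intervalIntegral.integral_const_mul,
      integral_id, intervalIntegral.integral_const]
    simp; ring
  have : L (x + u) - L x ≤ φ' 0 + H / 2 * ‖u‖ ^ 2 := by
    rw [← hFTC]; rw [hval] at hmono; exact hmono
  have hφ0 : φ' 0 = ⟪gradient L x, u⟫ := by simp [hφ']
  linarith [this, hφ0.le, hφ0.ge]

/-- CAGrad with a lower-bounded objective: `min_{0 ≤ t ≤ T} ‖∇L θₜ‖² ≤
2 (L θ₀ - m) / (α (1 - c²) (T + 1))`; in particular the minimum is `O(1/T)`, i.e.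
there is a constant `C` with `min_{t ≤ T} ‖∇L θₜ‖² ≤ C / (T + 1)` for all `T`. -/
theorem cagrad_convergence_min_bounded_below {n : ℕ} (L : EuclideanSpace ℝ (Fin n) → ℝ)
    (H α c m : ℝ)
    (hH : 0 < H) (hα : 0 < α) (hαH : α ≤ 1 / H) (hc0 : 0 ≤ c) (hc1 : c < 1)
    (hdiff : Differentiable ℝ L)
    (hlip : ∀ x y : EuclideanSpace ℝ (Fin n),
      ‖gradient L x - gradient L y‖ ≤ H * ‖x - y‖)
    (hbdd : ∀ x : EuclideanSpace ℝ (Fin n), m ≤ L x)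
    (θ d : ℕ → EuclideanSpace ℝ (Fin n))
    (hupd : ∀ t : ℕ, θ (t + 1) = θ t - α • d t)
    (hd : ∀ t : ℕ, ‖gradient L (θ t) - d t‖ ≤ c * ‖gradient L (θ t)‖) :
    (∀ T : ℕ, (Finset.range (T + 1)).inf' Finset.nonempty_range_add_one
        (fun t => ‖gradient L (θ t)‖ ^ 2) ≤
      2 * (L (θ 0) - m) / (α * (1 - c ^ 2) * (T + 1))) ∧
    (∃ C : ℝ, ∀ T : ℕ, (Finset.range (T + 1)).inf' Finset.nonempty_range_add_one
        (fun t => ‖gradient L (θ t)‖ ^ 2) ≤ C / (T + 1)) := by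
  set g : ℕ → EuclideanSpace ℝ (Fin n) := fun t => gradient L (θ t) with hg
  set K : ℝ := α * (1 - c ^ 2) / 2 with hK
  have hc2 : c ^ 2 < 1 := by nlinarith
  have hc2' : (0:ℝ) < 1 - c ^ 2 := by linarith
  have hKpos : 0 < K := by rw [hK]; positivity
  have hαH' : α * H ≤ 1 := by
    rw [le_div_iff₀ hH] at hαH; linarith
  -- per-step decrease
  have hstep : ∀ t : ℕ, L (θ (t + 1)) ≤ L (θ t) - K * ‖g t‖ ^ 2 := by
    intro t
    have hdesc := descent_lemma L H hH.le hdiff hlip (θ t) (-(α • d t))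
    have hθ : θ (t + 1) = θ t + -(α • d t) := by rw [hupd t]; abel
    rw [← hθ] at hdesc
    have hinner : ⟪g t, -(α • d t)⟫ = -(α * ⟪g t, d t⟫) := by
      rw [inner_neg_right, real_inner_smul_right]
    have hnorm : ‖-(α • d t)‖ ^ 2 = α ^ 2 * ‖d t‖ ^ 2 := by
      simp [norm_smul, mul_pow, Real.norm_eq_abs, sq_abs]
    rw [hinner, hnorm] at hdesc
    have hns : ‖g t - d t‖ ^ 2 = ‖g t‖ ^ 2 - 2 * ⟪g t, d t⟫ + ‖d t‖ ^ 2 := by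
      rw [@norm_sub_sq_real]
    have hsq : ‖g t - d t‖ ^ 2 ≤ c ^ 2 * ‖g t‖ ^ 2 := by
      have := hd t
      nlinarith [norm_nonneg (g t - d t), norm_nonneg (g t), mul_nonneg hc0 (norm_nonneg (g t))]
    have hdn : 0 ≤ ‖d t‖ ^ 2 := by positivity
    rw [hK]
    nlinarith [mul_le_mul_of_nonneg_right hαH' hdn, sq_nonneg α, mul_pos hα hα]
  -- telescoping sum
  have hsum : ∀ T : ℕ, K * ∑ t ∈ Finset.range (T + 1), ‖g t‖ ^ 2 ≤ L (θ 0) - m := by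
    intro T
    have htel : ∀ T : ℕ, K * ∑ t ∈ Finset.range (T + 1), ‖g t‖ ^ 2 ≤ L (θ 0) - L (θ (T + 1)) := by
      intro T
      induction T with
      | zero => rw [Finset.sum_range_one]; linarith [hstep 0]
      | succ T ih =>
        rw [Finset.sum_range_succ, mul_add]
        have := hstep (T + 1)
        linarith
    linarith [htel T, hbdd (θ (T + 1))]
  have hmain : ∀ T : ℕ, (Finset.range (T + 1)).inf' Finset.nonempty_range_add_one
      (fun t => ‖gradient L (θ t)‖ ^ 2) ≤ 2 * (L (θ 0) - m) / (α * (1 - c ^ 2) * (T + 1)) := by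
    intro T
    set M := (Finset.range (T + 1)).inf' Finset.nonempty_range_add_one
      (fun t => ‖gradient L (θ t)‖ ^ 2) with hM
    have hTpos : (0 : ℝ) < (T : ℝ) + 1 := by positivity
    have hMle : (T + 1 : ℝ) * M ≤ ∑ t ∈ Finset.range (T + 1), ‖g t‖ ^ 2 := by
      calc (T + 1 : ℝ) * M = ∑ _t ∈ Finset.range (T + 1), M := by
            rw [Finset.sum_const, Finset.card_range]; push_cast; ring
        _ ≤ ∑ t ∈ Finset.range (T + 1), ‖g t‖ ^ 2 := by
            apply Finset.sum_le_sum
            intro t ht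
            exact Finset.inf'_le _ ht
    have hdenpos : (0 : ℝ) < α * (1 - c ^ 2) * ((T : ℝ) + 1) := by
      have : (0:ℝ) < 1 - c ^ 2 := by linarith
      positivity
    rw [le_div_iff₀ hdenpos]
    have h1 : K * ((T + 1 : ℝ) * M) ≤ K * ∑ t ∈ Finset.range (T + 1), ‖g t‖ ^ 2 :=
      mul_le_mul_of_nonneg_left hMle hKpos.le
    have h2 := hsum T
    rw [hK] at h1 h2
    have key : M * (α * (1 - c ^ 2) * ((T:ℝ) + 1)) = 2 * (α * (1 - c ^ 2) / 2 * (((T:ℝ) + 1) * M)) := by ring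
    linarith
  refine ⟨hmain, ⟨2 * (L (θ 0) - m) / (α * (1 - c ^ 2)), fun T => ?_⟩⟩
  exact (hmain T).trans_eq (div_div _ _ _).symm
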